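/- Let O be the order of the previous context (p ≡ 2 mod 3, p > 3). The group G = {g ∈ M_2(O) : g⁺g = I} consists exactly of the 72 matrices of the form (u 0; 0 v) and (0 u; v 0) with u, v ∈ {±1, ±(1+i)/2, ±(1−i)/2}. -/

import Mathlib

open Quaternion

/-- The quaternion `i` (with `i² = −3`) in `ℍ[ℚ, −3, −p]`. -/
def qi3 (p : ℕ) : ℍ[ℚ, -3, -(p : ℚ)] := ⟨0, 1, 0, 0⟩

/-- The quaternion `j` in `ℍ[ℚ, −3, −p]`. -/
def qj3 (p : ℕ) : ℍ[ℚ, -3, -(p : ℚ)] := ⟨0, 0, 1, 0⟩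

/-- The quaternion `k = ij` in `ℍ[ℚ, −3, −p]`. -/
def qk3 (p : ℕ) : ℍ[ℚ, -3, -(p : ℚ)] := qi3 p * qj3 p

/-- Membership in the maximal order `O = Z + Z(1+i)/2 + Z(i+k)/3 + Z(j+k)/2`. -/
def memO0 (p : ℕ) (α : ℍ[ℚ, -3, -(p : ℚ)]) : Prop :=
  ∃ x y z w : ℤ, α = (x : ℚ) • 1 + ((y : ℚ) / 2) • (1 + qi3 p)
    + ((z : ℚ) / 3) • (qi3 p + qk3 p) + ((w : ℚ) / 2) • (qj3 p + qk3 p)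

/-- The six units `{±1, ±(1+i)/2, ±(1−i)/2}` of `O`. -/
def unitsO0 (p : ℕ) : Set ℍ[ℚ, -3, -(p : ℚ)] :=
  {1, -1, ((1 : ℚ) / 2) • (1 + qi3 p), -(((1 : ℚ) / 2) • (1 + qi3 p)),
    ((1 : ℚ) / 2) • (1 - qi3 p), -(((1 : ℚ) / 2) • (1 - qi3 p))}

/-- The reduced norm of an element of `O` written in coordinates. -/
lemma normO0 (p : ℕ) (x y z w : ℤ) (N : ℚ)
    (hN : N = (x:ℚ)^2 + x*y + y^2 + y*z + (1+(p:ℚ))/3*z^2 + p*(z*w) + p*w^2)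
    (α : ℍ[ℚ, -3, -(p : ℚ)])
    (hα : α = (x : ℚ) • 1 + ((y : ℚ) / 2) • (1 + qi3 p)
      + ((z : ℚ) / 3) • (qi3 p + qk3 p) + ((w : ℚ) / 2) • (qj3 p + qk3 p)) :
    star α * α = (N : ℍ[ℚ, -3, -(p:ℚ)]) := by
  subst hα hN
  ext <;> simp [qi3, qj3, qk3, QuaternionAlgebra.re_mul, ← QuaternionAlgebra.coe_pow] <;> ring

set_option maxHeartbeats 2000000 in
/-- An element of `O` of norm 1 is one of the six units. -/
lemma unit_of_norm (p : ℕ) (hp3mod : p % 3 = 2) (hp3 : 3 < p) (x y z w : ℤ)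
    (h12 : 3*(2*x+y)^2 + (3*y+2*z)^2 + 3*(p:ℤ)*w^2 + (p:ℤ)*(2*z+3*w)^2 = 12)
    (α : ℍ[ℚ, -3, -(p : ℚ)])
    (hα : α = (x : ℚ) • 1 + ((y : ℚ) / 2) • (1 + qi3 p)
      + ((z : ℚ) / 3) • (qi3 p + qk3 p) + ((w : ℚ) / 2) • (qj3 p + qk3 p)) :
    α ∈ unitsO0 p := by
  have hp5' : 5 ≤ p := by omega
  have hp5 : (5:ℤ) ≤ (p:ℤ) := by exact_mod_cast hp5'
  have hw2 : w^2 ≤ 0 := by nlinarith [sq_nonneg (2*x+y), sq_nonneg (3*y+2*z), sq_nonneg (2*z+3*w)]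
  have hw : w = 0 := by nlinarith [sq_nonneg w]
  subst hw
  have hz2 : z^2 ≤ 0 := by nlinarith [sq_nonneg (2*x+y), sq_nonneg (3*y+2*z)]
  have hz : z = 0 := by nlinarith [sq_nonneg z]
  subst hz
  have hy : y^2 ≤ 1 := by nlinarith [sq_nonneg (2*x+y)]
  have hx : x^2 ≤ 1 := by nlinarith [sq_nonneg (x+y), sq_nonneg y]
  have hy1 : -1 ≤ y ∧ y ≤ 1 := abs_le.mp (by nlinarith [sq_abs y, abs_nonneg y] : |y| ≤ 1)
  have hx1 : -1 ≤ x ∧ x ≤ 1 := abs_le.mp (by nlinarith [sq_abs x, abs_nonneg x] : |x| ≤ 1)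
  obtain ⟨hy1, hy2⟩ := hy1; obtain ⟨hx1, hx2⟩ := hx1
  subst hα
  interval_cases x <;> interval_cases y <;>
    simp only [unitsO0, Set.mem_insert_iff, Set.mem_singleton_iff] <;>
    first
      | (norm_num [QuaternionAlgebra.ext_iff, qi3, qj3, qk3]; done)
      | (exfalso; norm_num at h12)

/-- An element of `O` of norm 0 is zero. -/
lemma zero_of_norm (p : ℕ) (hp3 : 3 < p) (x y z w : ℤ)
    (h0 : 3*(2*x+y)^2 + (3*y+2*z)^2 + 3*(p:ℤ)*w^2 + (p:ℤ)*(2*z+3*w)^2 = 0)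
    (α : ℍ[ℚ, -3, -(p : ℚ)])
    (hα : α = (x : ℚ) • 1 + ((y : ℚ) / 2) • (1 + qi3 p)
      + ((z : ℚ) / 3) • (qi3 p + qk3 p) + ((w : ℚ) / 2) • (qj3 p + qk3 p)) :
    α = 0 := by
  have hp5 : (4:ℤ) ≤ (p:ℤ) := by exact_mod_cast hp3
  have hw2 : w^2 ≤ 0 := by nlinarith [sq_nonneg (2*x+y), sq_nonneg (3*y+2*z), sq_nonneg (2*z+3*w)]
  have hw : w = 0 := by nlinarith [sq_nonneg w]
  subst hw
  have hz2 : z^2 ≤ 0 := by nlinarith [sq_nonneg (2*x+y), sq_nonneg (3*y+2*z)]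
  have hz : z = 0 := by nlinarith [sq_nonneg z]
  subst hz
  have hy : y = 0 := by nlinarith [sq_nonneg (2*x+y), sq_nonneg y, sq_nonneg (3*y)]
  subst hy
  have hx : x = 0 := by nlinarith [sq_nonneg x]
  subst hx
  subst hα
  norm_num

/-- Key dichotomy for a column of an orthogonal matrix over `O`. -/
lemma col_dichotomy (p : ℕ) (hp3mod : p % 3 = 2) (hp3 : 3 < p)
    (α β : ℍ[ℚ, -3, -(p : ℚ)]) (hαO : memO0 p α) (hβO : memO0 p β)
    (h : star α * α + star β * β = 1) :
    (α = 0 ∧ β ∈ unitsO0 p) ∨ (β = 0 ∧ α ∈ unitsO0 p) := by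
  obtain ⟨x, y, z, w, hα⟩ := hαO
  obtain ⟨x', y', z', w', hβ⟩ := hβO
  have h1 := normO0 p x y z w _ rfl α hα
  have h2 := normO0 p x' y' z' w' _ rfl β hβ
  rw [h1, h2, ← QuaternionAlgebra.coe_add] at h
  have hsum : ((x:ℚ)^2 + x*y + y^2 + y*z + (1+(p:ℚ))/3*z^2 + p*(z*w) + p*w^2)
      + ((x':ℚ)^2 + x'*y' + y'^2 + y'*z' + (1+(p:ℚ))/3*z'^2 + p*(z'*w') + p*w'^2) = 1 := by
    have h' : ((((x:ℚ)^2 + x*y + y^2 + y*z + (1+(p:ℚ))/3*z^2 + p*(z*w) + p*w^2)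
      + ((x':ℚ)^2 + x'*y' + y'^2 + y'*z' + (1+(p:ℚ))/3*z'^2 + p*(z'*w') + p*w'^2) : ℚ)
        : ℍ[ℚ, -3, -(p:ℚ)]) = ((1:ℚ) : ℍ[ℚ, -3, -(p:ℚ)]) := by
      rw [h]; norm_num
    exact QuaternionAlgebra.coe_injective h'
  -- integer form
  obtain ⟨q, hq⟩ : ∃ q : ℕ, p = 3*q + 2 := ⟨p/3, by omega⟩
  have hZ : (3*(2*x+y)^2 + (3*y+2*z)^2 + 3*(p:ℤ)*w^2 + (p:ℤ)*(2*z+3*w)^2)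
      + (3*(2*x'+y')^2 + (3*y'+2*z')^2 + 3*(p:ℤ)*w'^2 + (p:ℤ)*(2*z'+3*w')^2) = 12 := by
    have hq' : ((p:ℤ):ℚ) = (p:ℚ) := by push_cast; ring
    have : ((3*(2*x+y)^2 + (3*y+2*z)^2 + 3*(p:ℤ)*w^2 + (p:ℤ)*(2*z+3*w)^2
        + (3*(2*x'+y')^2 + (3*y'+2*z')^2 + 3*(p:ℤ)*w'^2 + (p:ℤ)*(2*z'+3*w')^2) : ℤ) : ℚ) = 12 := by
      push_cast
      linear_combination 12 * hsum
    exact_mod_cast this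
  have hA : 3*(2*x+y)^2 + (3*y+2*z)^2 + 3*(p:ℤ)*w^2 + (p:ℤ)*(2*z+3*w)^2
      = 12 * (x^2 + x*y + y^2 + y*z + ((q:ℤ)+1)*z^2 + (p:ℤ)*z*w + (p:ℤ)*w^2) := by
    have : (p:ℤ) = 3*(q:ℤ) + 2 := by exact_mod_cast hq
    rw [this]; ring
  have hB : 3*(2*x'+y')^2 + (3*y'+2*z')^2 + 3*(p:ℤ)*w'^2 + (p:ℤ)*(2*z'+3*w')^2
      = 12 * (x'^2 + x'*y' + y'^2 + y'*z' + ((q:ℤ)+1)*z'^2 + (p:ℤ)*z'*w' + (p:ℤ)*w'^2) := by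
    have : (p:ℤ) = 3*(q:ℤ) + 2 := by exact_mod_cast hq
    rw [this]; ring
  have hp0 : (0:ℤ) ≤ (p:ℤ) := Int.natCast_nonneg p
  have hAnn : 0 ≤ 3*(2*x+y)^2 + (3*y+2*z)^2 + 3*(p:ℤ)*w^2 + (p:ℤ)*(2*z+3*w)^2 := by positivity
  have hBnn : 0 ≤ 3*(2*x'+y')^2 + (3*y'+2*z')^2 + 3*(p:ℤ)*w'^2 + (p:ℤ)*(2*z'+3*w')^2 := by
    positivity
  -- each is a multiple of 12, nonnegative, summing to 12: so one is 0 and the other 12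
  have hcases : (3*(2*x+y)^2 + (3*y+2*z)^2 + 3*(p:ℤ)*w^2 + (p:ℤ)*(2*z+3*w)^2 = 0
      ∧ 3*(2*x'+y')^2 + (3*y'+2*z')^2 + 3*(p:ℤ)*w'^2 + (p:ℤ)*(2*z'+3*w')^2 = 12)
      ∨ (3*(2*x'+y')^2 + (3*y'+2*z')^2 + 3*(p:ℤ)*w'^2 + (p:ℤ)*(2*z'+3*w')^2 = 0
      ∧ 3*(2*x+y)^2 + (3*y+2*z)^2 + 3*(p:ℤ)*w^2 + (p:ℤ)*(2*z+3*w)^2 = 12) := by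
    rw [hA] at hZ hAnn
    rw [hB] at hZ hBnn
    rw [hA, hB]
    omega
  rcases hcases with ⟨hA0, hB12⟩ | ⟨hB0, hA12⟩
  · exact Or.inl ⟨zero_of_norm p hp3 x y z w hA0 α hα,
      unit_of_norm p hp3mod hp3 x' y' z' w' hB12 β hβ⟩
  · exact Or.inr ⟨zero_of_norm p hp3 x' y' z' w' hB0 β hβ,
      unit_of_norm p hp3mod hp3 x y z w hA12 α hα⟩

/-- Each of the six units has norm one. -/
lemma star_mul_self_of_unit (p : ℕ) (u : ℍ[ℚ, -3, -(p : ℚ)]) (hu : u ∈ unitsO0 p) :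
    star u * u = 1 := by
  simp only [unitsO0, Set.mem_insert_iff, Set.mem_singleton_iff] at hu
  rcases hu with rfl | rfl | rfl | rfl | rfl | rfl <;>
    ext <;> simp [qi3, QuaternionAlgebra.re_mul] <;> norm_num

lemma star_mul_self_comm {a b : ℚ} (x : ℍ[ℚ, a, b]) : star x * x = x * star x := by
  ext <;> simp [QuaternionAlgebra.re_mul] <;> ring

/-- For `p ≡ 2 (mod 3)`, `p > 3`, the group `G = {g ∈ M₂(O) : g⁺g = I}` consists
exactly of the `72` matrices `(u 0; 0 v)` and `(0 u; v 0)` with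
`u, v ∈ {±1, ±(1+i)/2, ±(1−i)/2}`. -/
theorem aut_E0_sq (p : ℕ) (hp : p.Prime) (hp3mod : p % 3 = 2) (hp3 : 3 < p)
    (g : Matrix (Fin 2) (Fin 2) ℍ[ℚ, -3, -(p : ℚ)]) (hg : ∀ i j, memO0 p (g i j)) :
    g.conjTranspose * g = 1 ↔
      ∃ u v : ℍ[ℚ, -3, -(p : ℚ)], u ∈ unitsO0 p ∧ v ∈ unitsO0 p ∧
        (g = !![u, 0; 0, v] ∨ g = !![0, u; v, 0]) := by
  constructor
  · intro h
    have e00 : star (g 0 0) * g 0 0 + star (g 1 0) * g 1 0 = 1 := by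
      have := congrFun (congrFun h 0) 0
      simpa [Matrix.mul_apply, Fin.sum_univ_two, Matrix.conjTranspose_apply,
        Matrix.one_apply] using this
    have e01 : star (g 0 0) * g 0 1 + star (g 1 0) * g 1 1 = 0 := by
      have := congrFun (congrFun h 0) 1
      simpa [Matrix.mul_apply, Fin.sum_univ_two, Matrix.conjTranspose_apply,
        Matrix.one_apply] using this
    have e11 : star (g 0 1) * g 0 1 + star (g 1 1) * g 1 1 = 1 := by
      have := congrFun (congrFun h 1) 1
      simpa [Matrix.mul_apply, Fin.sum_univ_two, Matrix.conjTranspose_apply,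
        Matrix.one_apply] using this
    rcases col_dichotomy p hp3mod hp3 (g 0 0) (g 1 0) (hg 0 0) (hg 1 0) e00 with
      ⟨ha0, hcU⟩ | ⟨hc0, haU⟩
    · -- g 0 0 = 0, g 1 0 is a unit; then g 1 1 = 0 and g 0 1 is a unit
      have hc1 : star (g 1 0) * g 1 0 = 1 := star_mul_self_of_unit p _ hcU
      have hd0 : g 1 1 = 0 := by
        have h1 : star (g 1 0) * g 1 1 = 0 := by
          rw [ha0] at e01; simpa using e01
        have h2 : g 1 0 * (star (g 1 0) * g 1 1) = 0 := by rw [h1, mul_zero]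
        rwa [← mul_assoc, ← star_mul_self_comm, hc1, one_mul] at h2
      have hbU : g 0 1 ∈ unitsO0 p := by
        rcases col_dichotomy p hp3mod hp3 (g 0 1) (g 1 1) (hg 0 1) (hg 1 1) e11 with
          ⟨hb0, hdU⟩ | ⟨_, hbU⟩
        · exfalso
          rw [hd0] at hdU
          simp only [unitsO0, Set.mem_insert_iff, Set.mem_singleton_iff] at hdU
          rcases hdU with h' | h' | h' | h' | h' | h' <;>
            · have := congrArg QuaternionAlgebra.re h'
              simp [qi3] at this
        · exact hbU
      refine ⟨g 0 1, g 1 0, hbU, hcU, Or.inr ?_⟩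
      apply Matrix.ext; intro i j
      fin_cases i <;> fin_cases j <;> simp [ha0, hd0]
    · -- g 1 0 = 0, g 0 0 is a unit; then g 0 1 = 0 and g 1 1 is a unit
      have ha1 : star (g 0 0) * g 0 0 = 1 := star_mul_self_of_unit p _ haU
      have hb0 : g 0 1 = 0 := by
        have h1 : star (g 0 0) * g 0 1 = 0 := by
          rw [hc0] at e01; simpa using e01
        have h2 : g 0 0 * (star (g 0 0) * g 0 1) = 0 := by rw [h1, mul_zero]
        rwa [← mul_assoc, ← star_mul_self_comm, ha1, one_mul] at h2
      have hdU : g 1 1 ∈ unitsO0 p := by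
        rcases col_dichotomy p hp3mod hp3 (g 0 1) (g 1 1) (hg 0 1) (hg 1 1) e11 with
          ⟨_, hdU⟩ | ⟨hd0, hbU⟩
        · exact hdU
        · exfalso
          rw [hb0] at hbU
          simp only [unitsO0, Set.mem_insert_iff, Set.mem_singleton_iff] at hbU
          rcases hbU with h' | h' | h' | h' | h' | h' <;>
            · have := congrArg QuaternionAlgebra.re h'
              simp [qi3] at this
      refine ⟨g 0 0, g 1 1, haU, hdU, Or.inl ?_⟩
      apply Matrix.ext; intro i j
      fin_cases i <;> fin_cases j <;> simp [hc0, hb0]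
  · rintro ⟨u, v, hu, hv, rfl | rfl⟩ <;>
    · have hsu := star_mul_self_of_unit p u hu
      have hsv := star_mul_self_of_unit p v hv
      apply Matrix.ext; intro i j
      fin_cases i <;> fin_cases j <;>
        simp [Matrix.mul_apply, Fin.sum_univ_two, Matrix.conjTranspose_apply,
          Matrix.one_apply, hsu, hsv]
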